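/- Let K be a field and let (x₀:…:x₄) ∈ ℙ⁴(K) satisfy x₀x₁ = x₂x₃ and x₀x₃ + x₁x₃ + x₂x₄ = 0. Then x₀x₃ = 0 if and only if the point lies on one of the five lines L₁ = {x₀=x₁=x₂=0}, L₂ = {x₀=x₂=x₃=0}, L₃ = {x₀=x₃=x₄=0}, L₄ = {x₁=x₂=x₃=0}, L₅ = {x₁=x₃=x₄=0}. -/
import Mathlib


theorem lines_characterisation {K : Type*} [Field K] (x : Fin 5 → K)
    (hx : x ≠ 0)
    (heq1 : x 0 * x 1 = x 2 * x 3)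
    (heq2 : x 0 * x 3 + x 1 * x 3 + x 2 * x 4 = 0) :
    x 0 * x 3 = 0 ↔
      (x 0 = 0 ∧ x 1 = 0 ∧ x 2 = 0) ∨
      (x 0 = 0 ∧ x 2 = 0 ∧ x 3 = 0) ∨
      (x 0 = 0 ∧ x 3 = 0 ∧ x 4 = 0) ∨
      (x 1 = 0 ∧ x 2 = 0 ∧ x 3 = 0) ∨
      (x 1 = 0 ∧ x 3 = 0 ∧ x 4 = 0) := by
  constructor
  · intro h
    rcases mul_eq_zero.mp h with h0 | h3
    · rw [h0, zero_mul] at heq1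
      rcases mul_eq_zero.mp heq1.symm with h2 | h3
      · rw [h0, h2, zero_mul, zero_mul, add_zero, zero_add] at heq2
        rcases mul_eq_zero.mp heq2 with h1 | h3
        · exact Or.inl ⟨h0, h1, h2⟩
        · exact Or.inr (Or.inl ⟨h0, h2, h3⟩)
      · rw [h0, h3, zero_mul, mul_zero, zero_add, zero_add] at heq2
        rcases mul_eq_zero.mp heq2 with h2 | h4
        · exact Or.inr (Or.inl ⟨h0, h2, h3⟩)
        · exact Or.inr (Or.inr (Or.inl ⟨h0, h3, h4⟩))
    · rw [h3, mul_zero] at heq1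
      rcases mul_eq_zero.mp heq1 with h0 | h1
      · rw [h0, h3, zero_mul, mul_zero, zero_add, zero_add] at heq2
        rcases mul_eq_zero.mp heq2 with h2 | h4
        · exact Or.inr (Or.inl ⟨h0, h2, h3⟩)
        · exact Or.inr (Or.inr (Or.inl ⟨h0, h3, h4⟩))
      · rw [h1, h3, mul_zero, zero_mul, add_zero, zero_add] at heq2
        rcases mul_eq_zero.mp heq2 with h2 | h4
        · exact Or.inr (Or.inr (Or.inr (Or.inl ⟨h1, h2, h3⟩)))
        · exact Or.inr (Or.inr (Or.inr (Or.inr ⟨h1, h3, h4⟩)))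
  · rintro (⟨h, -⟩ | ⟨h, -⟩ | ⟨h, -⟩ | ⟨-, -, h⟩ | ⟨-, h, -⟩) <;>
      simp [h]
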